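/- Recurrence for symmetric power matrix elements: let R be an invertible (d+1)×(d+1) matrix, m a multi-index with |m| = N, n a multi-index with |n| = N−1, and 0 ≤ j ≤ d. Then Σ_{k=0}^{d} m_k · R̄^{(N−1)}_{m−e_k, n} · R_{kj} = (n_j + 1) · R̄^{(N)}_{m, n+e_j}, where e_k denotes the k-th standard multi-index and terms with m_k = 0 are omitted. -/

import Mathlib

open MvPolynomial Matrix BigOperators

lemma coeff_pderiv' {σ : Type*} [DecidableEq σ] (j : σ) (p : MvPolynomial σ ℂ) (n : σ →₀ ℕ) :
    coeff n (pderiv j p) = ((n j : ℂ) + 1) * coeff (n + Finsupp.single j 1) p := by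
  induction p using MvPolynomial.induction_on' with
  | monomial s a =>
    rw [pderiv_monomial, coeff_monomial, coeff_monomial]
    rcases Nat.eq_zero_or_pos (s j) with h0 | h1
    · have hs : s - Finsupp.single j 1 = s := by
        ext i; rcases eq_or_ne i j with rfl | hij
        · simp [h0]
        · simp [Finsupp.single_apply, Ne.symm hij]
      have hne : s ≠ n + Finsupp.single j 1 := by
        intro h; rw [h] at h0; simp at h0
      rw [hs, if_neg hne, mul_zero]
      split <;> simp [h0]
    · have key : s - Finsupp.single j 1 = n ↔ s = n + Finsupp.single j 1 := by
        constructor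
        · rintro rfl; ext i; rcases eq_or_ne i j with rfl | hij
          · simp [Nat.sub_add_cancel h1]
          · simp [Finsupp.single_apply, Ne.symm hij]
        · rintro rfl; ext i; rcases eq_or_ne i j with rfl | hij
          · simp
          · simp [Finsupp.single_apply, Ne.symm hij]
      by_cases h : s = n + Finsupp.single j 1
      · subst h
        rw [if_pos (key.mpr rfl), if_pos rfl, Finsupp.add_apply, Finsupp.single_eq_same]
        push_cast
        ring
      · rw [if_neg (fun hh => h (key.mp hh)), if_neg h, mul_zero]
  | add p q hp hq => simp [hp, hq, mul_add]

lemma pderiv_finset_prod {σ ι : Type*} [DecidableEq ι] (j : σ) (s : Finset ι)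
    (f : ι → MvPolynomial σ ℂ) :
    pderiv j (∏ i ∈ s, f i) = ∑ i ∈ s, pderiv j (f i) * ∏ k ∈ s.erase i, f k := by
  induction s using Finset.induction_on with
  | empty => simp
  | insert _ _ ha ih =>
    rename_i a s _
    rw [Finset.prod_insert ha, pderiv_mul, ih, Finset.sum_insert ha, Finset.erase_insert ha]
    rw [Finset.mul_sum]
    congr 1
    apply Finset.sum_congr rfl
    intro i hi
    rw [Finset.erase_insert_of_ne (by rintro rfl; exact ha hi), Finset.prod_insert
      (fun h => ha (Finset.mem_of_mem_erase h))]
    ring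


/-- Multi-indices of `d+1` entries with total degree `N`. -/
abbrev MIdx (d N : ℕ) := {m : Fin (d+1) → ℕ // ∑ i, m i = N}

instance (d N : ℕ) : Fintype (MIdx d N) :=
  Fintype.subtype (Finset.Nat.antidiagonalTuple (d+1) N)
    (fun _ => Finset.Nat.mem_antidiagonalTuple)

/-- The `(m,n)` matrix element of the symmetric power of `A`:
the coefficient of `x^n` in `(Ax)^m`. -/
noncomputable def symPowEntry {R : Type} [CommSemiring R] {d : ℕ}
    (A : Matrix (Fin (d+1)) (Fin (d+1)) R) (m n : Fin (d+1) → ℕ) : R :=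
  MvPolynomial.coeff (Finsupp.equivFunOnFinite.symm n)
    (∏ i, (∑ j, MvPolynomial.C (A i j) * MvPolynomial.X j) ^ m i)

/-- The `N`-th symmetric power of `A`, as a matrix indexed by multi-indices
of total degree `N`. -/
noncomputable def symPow {R : Type} [CommSemiring R] (d N : ℕ)
    (A : Matrix (Fin (d+1)) (Fin (d+1)) R) : Matrix (MIdx d N) (MIdx d N) R :=
  fun m n => symPowEntry A m.1 n.1

/-- `Γ(g)_{mn}`: the coefficient of `x^n` in `(Σ_{μ,λ} g_{μλ} x_λ ∂_μ) x^m`. -/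
noncomputable def gammaEntry {d : ℕ} (g : Matrix (Fin (d+1)) (Fin (d+1)) ℂ)
    (m n : Fin (d+1) → ℕ) : ℂ :=
  MvPolynomial.coeff (Finsupp.equivFunOnFinite.symm n)
    (∑ μ, ∑ lam, MvPolynomial.C (g μ lam) *
      (MvPolynomial.X lam * MvPolynomial.pderiv μ
        (MvPolynomial.monomial (Finsupp.equivFunOnFinite.symm m) 1)))

/-- The degree-`N` generator `Γ(g)` of the symmetric representation. -/
noncomputable def gammaMat (d N : ℕ) (g : Matrix (Fin (d+1)) (Fin (d+1)) ℂ) :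
    Matrix (MIdx d N) (MIdx d N) ℂ :=
  fun m n => gammaEntry g m.1 n.1

/-- The diagonal matrix `B` of multinomial coefficients of degree `N`. -/
noncomputable def multinomMat (d N : ℕ) : Matrix (MIdx d N) (MIdx d N) ℂ :=
  Matrix.diagonal fun m => (Nat.multinomial Finset.univ m.1 : ℂ)

/-- Recurrence for symmetric power matrix elements: for invertible `R`,
`Σ_k m_k R̄^{(N−1)}_{m−e_k,n} R_{kj} = (n_j + 1) R̄^{(N)}_{m,n+e_j}`. -/
theorem symPow_recurrence (d N : ℕ) (hN : 1 ≤ N)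
    (R : Matrix (Fin (d+1)) (Fin (d+1)) ℂ) (hR : IsUnit R.det)
    (m n : Fin (d+1) → ℕ) (hm : ∑ i, m i = N) (hn : ∑ i, n i = N - 1)
    (j : Fin (d+1)) :
    ∑ k : Fin (d+1), (m k : ℂ) * symPowEntry R (m - Pi.single k 1) n * R k j
      = ((n j : ℂ) + 1) * symPowEntry R m (n + Pi.single j 1) := by
  classical
  set L : Fin (d+1) → MvPolynomial (Fin (d+1)) ℂ := fun i => ∑ l, C (R i l) * X l with hL
  have hsymm : (Finsupp.equivFunOnFinite.symm (n + Pi.single j 1) : Fin (d+1) →₀ ℕ)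
      = Finsupp.equivFunOnFinite.symm n + Finsupp.single j 1 := by
    ext i
    simp [Finsupp.single_apply, Pi.single_apply, eq_comm]
  have hderivL : ∀ k, pderiv j (L k) = C (R k j) := by
    intro k
    rw [hL]
    simp only [map_sum, pderiv_C_mul, pderiv_X]
    simp [Pi.single_apply, mul_ite, Finset.sum_ite_eq]
  have main : pderiv j (∏ i, L i ^ m i)
      = ∑ k, (m k : MvPolynomial (Fin (d+1)) ℂ) * C (R k j)
          * ∏ i, L i ^ ((m - Pi.single k 1 : Fin (d+1) → ℕ) i) := by
    rw [pderiv_finset_prod]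
    apply Finset.sum_congr rfl
    intro k _
    rw [pderiv_pow, hderivL]
    rcases Nat.eq_zero_or_pos (m k) with h0 | h1
    · simp [h0]
    · have hprod : ∏ i, L i ^ ((m - Pi.single k 1 : Fin (d+1) → ℕ) i)
          = L k ^ (m k - 1) * ∏ i ∈ Finset.univ.erase k, L i ^ m i := by
        rw [← Finset.mul_prod_erase Finset.univ _ (Finset.mem_univ k)]
        congr 1
        · simp
        · refine Finset.prod_congr rfl fun i hi => ?_
          have hik : i ≠ k := (Finset.mem_erase.mp hi).1
          congr 1
          simp [Pi.single_eq_of_ne hik]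
      rw [hprod]
      ring
  have key : ((n j : ℂ) + 1) * symPowEntry R m (n + Pi.single j 1)
      = coeff (Finsupp.equivFunOnFinite.symm n) (pderiv j (∏ i, L i ^ m i)) := by
    rw [coeff_pderiv', symPowEntry, hsymm, hL]
    congr 2
  rw [key, main, coeff_sum]
  refine Finset.sum_congr rfl fun k _ => ?_
  rw [← map_natCast (C : ℂ →+* MvPolynomial (Fin (d+1)) ℂ) (m k), ← _root_.map_mul, coeff_C_mul,
    symPowEntry]
  ring
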